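/- Let ξ and W be independent real-valued random variables such that ξ has a probability density function bounded above by a constant b > 0. Then for any event A contained in {ξ > W}, E[(ξ - W)·1_A] ≥ P(A)² / (2b). -/

import Mathlib

open MeasureTheory

set_option maxHeartbeats 1000000 in
/-- If `ξ` and `W` are independent real random variables and `ξ` has a density bounded by `b`,
then for any event `A ⊆ {ξ > W}`, `E[(ξ - W)·1_A] ≥ P(A)²/(2b)`. -/
theorem expectation_sub_indicator_ge {Ω : Type*} [MeasurableSpace Ω]
    (μ : Measure Ω) [IsProbabilityMeasure μ] (ξ W : Ω → ℝ)
    (hξ : Measurable ξ) (hW : Measurable W)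
    (hindep : ProbabilityTheory.IndepFun ξ W μ)
    (b : ℝ) (hb : 0 < b)
    (hdens : μ.map ξ ≤ (ENNReal.ofReal b) • (volume : Measure ℝ))
    (A : Set Ω) (hA : MeasurableSet A) (hAsub : A ⊆ {ω | W ω < ξ ω}) :
    ∫⁻ ω in A, ENNReal.ofReal (ξ ω - W ω) ∂μ ≥
      ENNReal.ofReal ((μ A).toReal ^ 2 / (2 * b)) := by
  set p : ℝ := (μ A).toReal with hp
  have hp0 : 0 ≤ p := ENNReal.toReal_nonneg
  have hpA : ENNReal.ofReal p = μ A := ENNReal.ofReal_toReal (measure_ne_top μ A)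
  set c : ℝ := p / b with hc
  have hc0 : 0 ≤ c := div_nonneg hp0 hb.le
  -- key bound: μ {W < ξ ≤ W + t} ≤ b * t
  have key : ∀ t : ℝ, 0 ≤ t →
      μ {ω | W ω < ξ ω ∧ ξ ω ≤ W ω + t} ≤ ENNReal.ofReal b * ENNReal.ofReal t := by
    intro t ht
    have hmap : μ.map (fun ω => (ξ ω, W ω)) = (μ.map ξ).prod (μ.map W) :=
      (ProbabilityTheory.indepFun_iff_map_prod_eq_prod_map_map hξ.aemeasurable
        hW.aemeasurable).mp hindep
    have hS : MeasurableSet {q : ℝ × ℝ | q.2 < q.1 ∧ q.1 ≤ q.2 + t} :=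
      (measurableSet_lt measurable_snd measurable_fst).inter
        (measurableSet_le measurable_fst (measurable_snd.add_const t))
    have h1 : μ {ω | W ω < ξ ω ∧ ξ ω ≤ W ω + t}
        = (μ.map ξ).prod (μ.map W) {q : ℝ × ℝ | q.2 < q.1 ∧ q.1 ≤ q.2 + t} := by
      rw [← hmap, Measure.map_apply (hξ.prodMk hW) hS]
      rfl
    haveI : IsProbabilityMeasure (μ.map ξ) := Measure.isProbabilityMeasure_map hξ.aemeasurable
    haveI : IsProbabilityMeasure (μ.map W) := Measure.isProbabilityMeasure_map hW.aemeasurable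
    rw [h1, Measure.prod_apply_symm hS]
    have h2 : ∀ y : ℝ, (μ.map ξ) ((fun x => (x, y)) ⁻¹' {q : ℝ × ℝ | q.2 < q.1 ∧ q.1 ≤ q.2 + t})
        ≤ ENNReal.ofReal b * ENNReal.ofReal t := by
      intro y
      have : ((fun x => (x, y)) ⁻¹' {q : ℝ × ℝ | q.2 < q.1 ∧ q.1 ≤ q.2 + t})
          = Set.Ioc y (y + t) := rfl
      rw [this]
      calc (μ.map ξ) (Set.Ioc y (y + t))
          ≤ ((ENNReal.ofReal b) • (volume : Measure ℝ)) (Set.Ioc y (y + t)) := hdens _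
        _ = ENNReal.ofReal b * ENNReal.ofReal t := by
            simp [Real.volume_Ioc]
    calc ∫⁻ y, (μ.map ξ) ((fun x => (x, y)) ⁻¹' {q : ℝ × ℝ | q.2 < q.1 ∧ q.1 ≤ q.2 + t}) ∂(μ.map W)
        ≤ ∫⁻ _, ENNReal.ofReal b * ENNReal.ofReal t ∂(μ.map W) := lintegral_mono h2
      _ = ENNReal.ofReal b * ENNReal.ofReal t := by simp
  -- layer cake
  have hnn : 0 ≤ᵐ[μ.restrict A] fun ω => ξ ω - W ω := by
    filter_upwards [ae_restrict_mem hA] with ω hω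
    exact sub_nonneg.mpr (hAsub hω).le
  have hlayer : ∫⁻ ω in A, ENNReal.ofReal (ξ ω - W ω) ∂μ
      = ∫⁻ t in Set.Ioi (0:ℝ), μ.restrict A {ω | t < ξ ω - W ω} :=
    lintegral_eq_lintegral_meas_lt (μ.restrict A) hnn (hξ.sub hW).aemeasurable
  -- pointwise lower bound for t ∈ Ioc 0 c
  have hpt : ∀ t ∈ Set.Ioc (0:ℝ) c,
      ENNReal.ofReal (p - b * t) ≤ μ.restrict A {ω | t < ξ ω - W ω} := by
    intro t ht
    have hmeas : MeasurableSet {ω | t < ξ ω - W ω} :=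
      measurableSet_lt measurable_const (hξ.sub hW)
    rw [Measure.restrict_apply hmeas]
    have hsub : A ⊆ (A ∩ {ω | t < ξ ω - W ω}) ∪ {ω | W ω < ξ ω ∧ ξ ω ≤ W ω + t} := by
      intro ω hω
      by_cases h : t < ξ ω - W ω
      · exact Or.inl ⟨hω, h⟩
      · exact Or.inr ⟨hAsub hω, by linarith [not_lt.mp h]⟩
    have hle : μ A ≤ μ ({ω | t < ξ ω - W ω} ∩ A) + ENNReal.ofReal b * ENNReal.ofReal t := by
      calc μ A ≤ μ ((A ∩ {ω | t < ξ ω - W ω}) ∪ {ω | W ω < ξ ω ∧ ξ ω ≤ W ω + t}) :=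
            measure_mono hsub
        _ ≤ μ (A ∩ {ω | t < ξ ω - W ω}) + μ {ω | W ω < ξ ω ∧ ξ ω ≤ W ω + t} :=
            measure_union_le _ _
        _ ≤ μ ({ω | t < ξ ω - W ω} ∩ A) + ENNReal.ofReal b * ENNReal.ofReal t := by
            rw [Set.inter_comm]
            exact add_le_add_right (key t ht.1.le) _
    calc ENNReal.ofReal (p - b * t)
        ≤ ENNReal.ofReal p - ENNReal.ofReal (b * t) := by
          rw [ENNReal.ofReal_sub _ (mul_nonneg hb.le ht.1.le)]
      _ = μ A - ENNReal.ofReal b * ENNReal.ofReal t := by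
          rw [hpA, ENNReal.ofReal_mul hb.le]
      _ ≤ μ ({ω | t < ξ ω - W ω} ∩ A) := by
          exact tsub_le_iff_right.mpr hle
  -- compute the lower integral
  have hcalc : ∫⁻ t in Set.Ioc (0:ℝ) c, ENNReal.ofReal (p - b * t)
      = ENNReal.ofReal (p ^ 2 / (2 * b)) := by
    have hcont : Continuous fun t : ℝ => p - b * t := by continuity
    have hint : IntegrableOn (fun t : ℝ => p - b * t) (Set.Ioc 0 c) volume :=
      hcont.integrableOn_Ioc
    rw [← ofReal_integral_eq_lintegral_ofReal hint]
    · congr 1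
      rw [← intervalIntegral.integral_of_le hc0]
      have h1 : IntervalIntegrable (fun _ : ℝ => p) volume 0 c := intervalIntegrable_const
      have h2 : IntervalIntegrable (fun t : ℝ => b * t) volume 0 c :=
        (continuous_const.mul continuous_id).intervalIntegrable 0 c
      have : ∫ t in (0:ℝ)..c, (p - b * t) = p * c - b * ((c ^ 2 - 0 ^ 2) / 2) := by
        rw [intervalIntegral.integral_sub h1 h2, intervalIntegral.integral_const,
          intervalIntegral.integral_const_mul, integral_id]
        simp [mul_comm]
      rw [this, hc]
      field_simp
      ring
    · filter_upwards [ae_restrict_mem measurableSet_Ioc] with t ht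
      have h3 : b * t ≤ b * c := mul_le_mul_of_nonneg_left ht.2 hb.le
      rw [hc, mul_div_cancel₀ _ hb.ne'] at h3
      show (0:ℝ) ≤ p - b * t
      linarith
  -- put it together
  have hmble : Measurable (fun t : ℝ => (μ.restrict A) {ω | t < ξ ω - W ω}) := by
    have hanti : Antitone (fun t : ℝ => (μ.restrict A) {ω | t < ξ ω - W ω}) :=
      fun t₁ t₂ hle => measure_mono (fun ω hω => lt_of_le_of_lt hle hω)
    exact hanti.measurable
  calc ENNReal.ofReal (p ^ 2 / (2 * b))
      = ∫⁻ t in Set.Ioc (0:ℝ) c, ENNReal.ofReal (p - b * t) := hcalc.symm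
    _ ≤ ∫⁻ t in Set.Ioc (0:ℝ) c, μ.restrict A {ω | t < ξ ω - W ω} :=
        setLIntegral_mono_ae hmble.aemeasurable (Filter.Eventually.of_forall hpt)
    _ ≤ ∫⁻ t in Set.Ioi (0:ℝ), μ.restrict A {ω | t < ξ ω - W ω} :=
        lintegral_mono_set Set.Ioc_subset_Ioi_self
    _ = ∫⁻ ω in A, ENNReal.ofReal (ξ ω - W ω) ∂μ := hlayer.symm
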